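/- Let R = ℂ⟦X,Y⟧ be the formal power series ring in two variables over ℂ, let k ≥ 2 be an integer and ε ∈ {1, −1}. If l, n ∈ R both have zero constant coefficient and l·n = Y·(X² + ε·Y^{2k−1}), then the quotient ℂ-vector space R / Ideal.span {l, n} has dimension 2. -/

import Mathlib

open MvPowerSeries
noncomputable section
namespace Stmt5Aux
abbrev R2 : Type := MvPowerSeries (Fin 2) ℂ
def D (i j : ℕ) : Fin 2 →₀ ℕ := Finsupp.single 0 i + Finsupp.single 1 j
@[simp] lemma D_apply0 (i j : ℕ) : D i j 0 = i := by simp [D, Finsupp.single_apply]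
@[simp] lemma D_apply1 (i j : ℕ) : D i j 1 = j := by simp [D, Finsupp.single_apply]
lemma eq_D (d : Fin 2 →₀ ℕ) : d = D (d 0) (d 1) := by ext i; fin_cases i <;> simp
lemma D_add (i j p q : ℕ) : D i j + D p q = D (i + p) (j + q) := by ext t; fin_cases t <;> simp

lemma coeff_mul_D (f g : R2) (i j : ℕ) :
    (coeff (D i j)) (f * g) =
      ∑ p ∈ Finset.range (i + 1), ∑ q ∈ Finset.range (j + 1),
        (coeff (D p q)) f * (coeff (D (i - p) (j - q))) g := by
  rw [coeff_mul, ← Finset.sum_product']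
  refine Finset.sum_nbij' (fun pq => (pq.1 0, pq.1 1))
    (fun xy => (D xy.1 xy.2, D (i - xy.1) (j - xy.2))) ?_ ?_ ?_ ?_ ?_
  · rintro ⟨p, q⟩ hpq
    rw [Finset.HasAntidiagonal.mem_antidiagonal] at hpq
    have h0 : p 0 + q 0 = i := by
      have := congrArg (fun d : Fin 2 →₀ ℕ => d 0) hpq; simpa using this
    have h1 : p 1 + q 1 = j := by
      have := congrArg (fun d : Fin 2 →₀ ℕ => d 1) hpq; simpa using this
    simp only [Finset.mem_product, Finset.mem_range]
    omega
  · rintro ⟨x, y⟩ hxy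
    simp only [Finset.mem_product, Finset.mem_range] at hxy
    rw [Finset.HasAntidiagonal.mem_antidiagonal, D_add]
    congr 1 <;> omega
  · rintro ⟨p, q⟩ hpq
    rw [Finset.HasAntidiagonal.mem_antidiagonal] at hpq
    have h0 : p 0 + q 0 = i := by
      have := congrArg (fun d : Fin 2 →₀ ℕ => d 0) hpq; simpa using this
    have h1 : p 1 + q 1 = j := by
      have := congrArg (fun d : Fin 2 →₀ ℕ => d 1) hpq; simpa using this
    have hq : q = D (i - p 0) (j - p 1) := by
      rw [eq_D q]; congr 1 <;> omega
    simp only [Prod.mk.injEq]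
    exact ⟨(eq_D p).symm, hq.symm⟩
  · rintro ⟨x, y⟩ _
    simp
  · rintro ⟨p, q⟩ hpq
    rw [Finset.HasAntidiagonal.mem_antidiagonal] at hpq
    have h0 : p 0 + q 0 = i := by
      have := congrArg (fun d : Fin 2 →₀ ℕ => d 0) hpq; simpa using this
    have h1 : p 1 + q 1 = j := by
      have := congrArg (fun d : Fin 2 →₀ ℕ => d 1) hpq; simpa using this
    have hq : q = D (i - p 0) (j - p 1) := by
      rw [eq_D q]; congr 1 <;> omega
    simp only []
    rw [← eq_D p, ← hq]


lemma coeff_mul_D0 (f g : R2) (t : ℕ) :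
    (coeff (D 0 t)) (f * g) =
      ∑ q ∈ Finset.range (t + 1), (coeff (D 0 q)) f * (coeff (D 0 (t - q))) g := by
  rw [coeff_mul_D]; simp

lemma coeff_mul_DX (f g : R2) (t : ℕ) :
    (coeff (D t 0)) (f * g) =
      ∑ p ∈ Finset.range (t + 1), (coeff (D p 0)) f * (coeff (D (t - p) 0)) g := by
  rw [coeff_mul_D]; simp

lemma coeff_mul_D1 (f g : R2) (t : ℕ) :
    (coeff (D 1 t)) (f * g) =
      ∑ q ∈ Finset.range (t + 1),
        ((coeff (D 0 q)) f * (coeff (D 1 (t - q))) g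
          + (coeff (D 1 q)) f * (coeff (D 0 (t - q))) g) := by
  rw [coeff_mul_D, Finset.sum_range_succ, Finset.sum_range_one, ← Finset.sum_add_distrib]

/-- Evaluation of an antidiagonal sum at the minimal nonvanishing indices. -/
lemma min_sum (A B : ℕ → ℂ) (r s : ℕ) (hA : ∀ i < r, A i = 0) (hB : ∀ j < s, B j = 0) :
    ∑ q ∈ Finset.range (r + s + 1), A q * B (r + s - q) = A r * B s := by
  rw [Finset.sum_eq_single r]
  · congr 1; congr 1; omega
  · intro q hq hne
    have hq' := Finset.mem_range.1 hq
    rcases lt_or_gt_of_ne hne with h | h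
    · rw [hA q h, zero_mul]
    · rw [hB (r + s - q) (by omega), mul_zero]
  · intro h; exact absurd (Finset.mem_range.2 (by omega)) h


lemma D00 : D 0 0 = 0 := by ext t; fin_cases t <;> simp

lemma D_eq_single0 (i j t : ℕ) : D i j = Finsupp.single 0 t ↔ i = t ∧ j = 0 := by
  have h : Finsupp.single (0 : Fin 2) t = D t 0 := by ext u; fin_cases u <;> simp
  rw [h]
  constructor
  · intro hh
    refine ⟨?_, ?_⟩
    · have := congrArg (fun d : Fin 2 →₀ ℕ => d 0) hh; simpa using this
    · have := congrArg (fun d : Fin 2 →₀ ℕ => d 1) hh; simpa using this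
  · rintro ⟨rfl, rfl⟩; rfl

lemma D_eq_single1 (i j t : ℕ) : D i j = Finsupp.single 1 t ↔ i = 0 ∧ j = t := by
  have h : Finsupp.single (1 : Fin 2) t = D 0 t := by ext u; fin_cases u <;> simp
  rw [h]
  constructor
  · intro hh
    refine ⟨?_, ?_⟩
    · have := congrArg (fun d : Fin 2 →₀ ℕ => d 0) hh; simpa using this
    · have := congrArg (fun d : Fin 2 →₀ ℕ => d 1) hh; simpa using this
  · rintro ⟨rfl, rfl⟩; rfl

lemma coeff_g (ε : ℂ) (m i j : ℕ) :
    coeff (D i j) ((X 0) ^ 2 + (C ε) * (X 1) ^ m : R2) =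
      (if i = 2 ∧ j = 0 then 1 else 0) + ε * (if i = 0 ∧ j = m then 1 else 0) := by
  classical
  rw [map_add, coeff_X_pow, coeff_C_mul, coeff_X_pow,
    if_congr (D_eq_single0 i j 2) rfl rfl, if_congr (D_eq_single1 i j m) rfl rfl]

lemma Y_prime : Prime (X 1 : R2) := by
  classical
  refine ⟨?_, ?_, ?_⟩
  · intro h
    have : coeff (D 0 1) (X 1 : R2) = 1 := by
      rw [coeff_X, if_pos ((D_eq_single1 0 1 1).2 ⟨rfl, rfl⟩)]
    rw [h] at this
    simp at this
  · rw [isUnit_iff_constantCoeff, constantCoeff_X]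
    exact not_isUnit_zero
  · intro a b h
    by_contra hcon
    push_neg at hcon
    obtain ⟨hna, hnb⟩ := hcon
    rw [X_dvd_iff] at hna hnb
    push_neg at hna hnb
    obtain ⟨da, hda0, hda⟩ := hna
    obtain ⟨db, hdb0, hdb⟩ := hnb
    have hPa : ∃ i, coeff (D i 0) a ≠ 0 := ⟨da 0, by rwa [← hda0, ← eq_D da]⟩
    have hPb : ∃ i, coeff (D i 0) b ≠ 0 := ⟨db 0, by rwa [← hdb0, ← eq_D db]⟩
    set r := Nat.find hPa with hrdef
    set s := Nat.find hPb with hsdef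
    have hr : coeff (D r 0) a ≠ 0 := Nat.find_spec hPa
    have hs : coeff (D s 0) b ≠ 0 := Nat.find_spec hPb
    have hrmin : ∀ i < r, coeff (D i 0) a = 0 := fun i hi =>
      not_not.1 (Nat.find_min hPa hi)
    have hsmin : ∀ j < s, coeff (D j 0) b = 0 := fun j hj =>
      not_not.1 (Nat.find_min hPb hj)
    have hab : coeff (D (r + s) 0) (a * b) =
        coeff (D r 0) a * coeff (D s 0) b := by
      rw [coeff_mul_DX]
      exact min_sum (fun i => coeff (D i 0) a) (fun j => coeff (D j 0) b) r s hrmin hsmin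
    have hz : coeff (D (r + s) 0) (a * b) = 0 := by
      rw [X_dvd_iff] at h
      exact h _ (by simp)
    rw [hz] at hab
    exact (mul_ne_zero hr hs) hab.symm

lemma last (ε : ℂ) (m : ℕ) (a b : R2)
    (hab : a * b = (X 0) ^ 2 + (C ε) * (X 1) ^ m)
    (r s : ℕ) (hr : coeff (D 0 r) a ≠ 0)
    (hrmin : ∀ i < r, coeff (D 0 i) a = 0)
    (hsmin : ∀ j < s, coeff (D 0 j) b = 0)
    (hrs : r < s) (hbx : coeff (D 1 0) b ≠ 0) : False := by
  have hcalc : coeff (D 1 r) (a * b) = coeff (D 0 r) a * coeff (D 1 0) b := by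
    rw [coeff_mul_D1, Finset.sum_add_distrib]
    have h2 : ∑ q ∈ Finset.range (r + 1),
        (coeff (D 1 q)) a * (coeff (D 0 (r - q))) b = 0 := by
      apply Finset.sum_eq_zero
      intro q hq
      rw [hsmin (r - q) (by omega), mul_zero]
    rw [h2, add_zero, Finset.sum_eq_single r]
    · rw [Nat.sub_self]
    · intro q hq hne
      have hq' := Finset.mem_range.1 hq
      rw [hrmin q (by omega), zero_mul]
    · intro h; exact absurd (Finset.mem_range.2 (by omega)) h
  rw [hab, coeff_g] at hcalc
  rw [if_neg (by omega : ¬((1:ℕ) = 2 ∧ r = 0)), if_neg (by omega : ¬((1:ℕ) = 0 ∧ r = m)),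
    mul_zero, add_zero] at hcalc
  exact (mul_ne_zero hr hbx) hcalc.symm

lemma key (ε : ℂ) (hε : ε ≠ 0) (m : ℕ) (hmodd : ¬ (2 ∣ m)) (a b : R2)
    (ha : constantCoeff a = 0) (hb : constantCoeff b = 0)
    (hab : a * b = (X 0) ^ 2 + (C ε) * (X 1) ^ m) : False := by
  classical
  have ha0 : coeff (D 0 0) a = 0 := by
    rw [D00, coeff_zero_eq_constantCoeff_apply]; exact ha
  have hb0 : coeff (D 0 0) b = 0 := by
    rw [D00, coeff_zero_eq_constantCoeff_apply]; exact hb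
  -- the X-coefficients multiply to 1
  have hX : coeff (D 1 0) a * coeff (D 1 0) b = 1 := by
    have h := coeff_mul_DX a b 2
    rw [hab, coeff_g] at h
    rw [Finset.sum_range_succ, Finset.sum_range_succ, Finset.sum_range_one] at h
    simp only [ha0, hb0, Nat.sub_self, zero_mul, mul_zero, zero_add, add_zero] at h
    simpa using h.symm
  have hax : coeff (D 1 0) a ≠ 0 := fun h => by rw [h, zero_mul] at hX; exact one_ne_zero hX.symm
  have hbx : coeff (D 1 0) b ≠ 0 := fun h => by rw [h, mul_zero] at hX; exact one_ne_zero hX.symm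
  -- existence of minimal pure-Y coefficients
  have hYm : coeff (D 0 m) (a * b) = ε := by
    rw [hab, coeff_g]
    simp [hε, show ¬((0:ℕ) = 2 ∧ m = 0) from by omega]
  have hex : ∃ q ∈ Finset.range (m + 1),
      (coeff (D 0 q)) a * (coeff (D 0 (m - q))) b ≠ 0 := by
    apply Finset.exists_ne_zero_of_sum_ne_zero
    rw [← coeff_mul_D0, hYm]; exact hε
  obtain ⟨q0, _, hq0⟩ := hex
  have hPa : ∃ i, coeff (D 0 i) a ≠ 0 := ⟨q0, fun h => hq0 (by rw [h, zero_mul])⟩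
  have hPb : ∃ j, coeff (D 0 j) b ≠ 0 := ⟨m - q0, fun h => hq0 (by rw [h, mul_zero])⟩
  set r := Nat.find hPa
  set s := Nat.find hPb
  have hr : coeff (D 0 r) a ≠ 0 := Nat.find_spec hPa
  have hs : coeff (D 0 s) b ≠ 0 := Nat.find_spec hPb
  have hrmin : ∀ i < r, coeff (D 0 i) a = 0 := fun i hi => not_not.1 (Nat.find_min hPa hi)
  have hsmin : ∀ j < s, coeff (D 0 j) b = 0 := fun j hj => not_not.1 (Nat.find_min hPb hj)
  -- r + s = m
  have hsum : coeff (D 0 (r + s)) (a * b) = coeff (D 0 r) a * coeff (D 0 s) b := by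
    rw [coeff_mul_D0]
    exact min_sum (fun i => coeff (D 0 i) a) (fun j => coeff (D 0 j) b) r s hrmin hsmin
  have hrsm : r + s = m := by
    by_contra hne
    rw [hab, coeff_g] at hsum
    rw [if_neg (by omega : ¬((0:ℕ) = 2 ∧ r + s = 0)),
      if_neg (by omega : ¬((0:ℕ) = 0 ∧ r + s = m)), mul_zero, add_zero] at hsum
    exact (mul_ne_zero hr hs) hsum.symm
  have hrns : r ≠ s := by omega
  rcases lt_or_gt_of_ne hrns with hlt | hgt
  · exact last ε m a b hab r s hr hrmin hsmin hlt hbx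
  · exact last ε m b a (by rwa [mul_comm]) s r hs hsmin hrmin hgt hax


lemma span_eq (ε : ℂ) (hε : ε ≠ 0) (m : ℕ) (hmodd : ¬ (2 ∣ m)) (hm1 : 1 ≤ m)
    (l n : R2)
    (hl : constantCoeff l = 0) (hn : constantCoeff n = 0)
    (hln : l * n = X 1 * ((X 0) ^ 2 + (C ε) * (X 1) ^ m))
    (hdvd : (X 1 : R2) ∣ l) :
    Ideal.span {l, n} = Ideal.span {(X 1 : R2), (X 0) ^ 2} := by
  obtain ⟨a, rfl⟩ := hdvd
  have hY0 : (X 1 : R2) ≠ 0 := Y_prime.ne_zero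
  have han : a * n = (X 0) ^ 2 + (C ε) * (X 1) ^ m := by
    apply mul_left_cancel₀ hY0
    rw [← mul_assoc, hln]
  have haU : IsUnit a := by
    rw [isUnit_iff_constantCoeff, isUnit_iff_ne_zero]
    intro h
    exact key ε hε m hmodd a n h hn han
  obtain ⟨u, rfl⟩ := haU
  have hmemY : (X 1 : R2) ∈ Ideal.span {(X 1 : R2) * ↑u, n} := by
    have : (X 1 : R2) = ((X 1 : R2) * ↑u) * ↑u⁻¹ := by
      rw [mul_assoc, u.mul_inv, mul_one]
    rw [this]
    exact Ideal.mul_mem_right _ _ (Ideal.subset_span (by simp))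
  have hn_eq : n = (↑u⁻¹ : R2) * ((X 0) ^ 2 + (C ε) * (X 1) ^ m) := by
    rw [← han, ← mul_assoc, u.inv_mul, one_mul]
  apply le_antisymm
  · rw [Ideal.span_le]
    rintro x hx
    simp only [Set.mem_insert_iff, Set.mem_singleton_iff] at hx
    rcases hx with rfl | rfl
    · exact Ideal.mul_mem_right _ _ (Ideal.subset_span (by simp))
    · rw [hn_eq]
      apply Ideal.mul_mem_left
      apply Ideal.add_mem
      · exact Ideal.subset_span (by simp)
      · have : (C ε) * (X 1 : R2) ^ m
            = ((C ε) * (X 1 : R2) ^ (m - 1)) * X 1 := by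
          rw [mul_assoc, ← pow_succ]
          congr 2
          omega
        rw [this]
        exact Ideal.mul_mem_left _ _ (Ideal.subset_span (by simp))
  · rw [Ideal.span_le]
    rintro x hx
    simp only [Set.mem_insert_iff, Set.mem_singleton_iff] at hx
    rcases hx with rfl | rfl
    · exact hmemY
    · have hXsq : (X 0 : R2) ^ 2 = ((u : R2) * n) - (C ε) * (X 1) ^ m := by
        linear_combination -han
      rw [hXsq]
      apply sub_mem
      · exact Ideal.mul_mem_left _ _ (Ideal.subset_span (by simp))
      · have : (C ε) * (X 1 : R2) ^ m
            = ((C ε) * (X 1 : R2) ^ (m - 1)) * X 1 := by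
          rw [mul_assoc, ← pow_succ]
          congr 2
          omega
        rw [this]
        exact Ideal.mul_mem_left _ _ hmemY


def Jspan : Ideal R2 := Ideal.span {(X 1 : R2), (X 0) ^ 2}

def psi : R2 →ₗ[ℂ] ℂ × ℂ :=
  LinearMap.prod (coeff (0 : Fin 2 →₀ ℕ)) (coeff (D 1 0))

lemma mem_J_of (f : R2) (h0 : coeff (0 : Fin 2 →₀ ℕ) f = 0)
    (h1 : coeff (D 1 0) f = 0) : f ∈ Jspan := by
  classical
  set f1 : R2 := fun d => if d 1 = 0 then coeff d f else 0 with hf1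
  have hc1 : ∀ d, coeff d f1 = if d 1 = 0 then coeff d f else 0 := fun d => rfl
  have hdvd2 : (X 0 : R2) ^ 2 ∣ f1 := by
    rw [X_pow_dvd_iff]
    intro d hd
    rw [hc1]
    by_cases hd1 : d 1 = 0
    · rw [if_pos hd1]
      have hdD : d = D (d 0) 0 := by rw [← hd1]; exact eq_D d
      interval_cases h : d 0
      · rw [hdD, D00]; exact h0
      · rw [hdD]; exact h1
    · rw [if_neg hd1]
  have hdvd1 : (X 1 : R2) ∣ (f - f1) := by
    rw [X_dvd_iff]
    intro d hd
    rw [map_sub, hc1, if_pos hd, sub_self]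
  obtain ⟨c1, hc1'⟩ := hdvd1
  obtain ⟨c2, hc2'⟩ := hdvd2
  have : f = (X 1 : R2) * c1 + (X 0 : R2) ^ 2 * c2 := by
    rw [← hc1', ← hc2']; ring
  rw [this]
  exact Ideal.add_mem _ (Ideal.mul_mem_right _ _ (Ideal.subset_span (by simp)))
    (Ideal.mul_mem_right _ _ (Ideal.subset_span (by simp)))

lemma J_le_ker : Jspan.restrictScalars ℂ ≤ LinearMap.ker psi := by
  intro x hx
  rw [Submodule.restrictScalars_mem, Jspan, Ideal.mem_span_pair] at hx
  obtain ⟨a, b, rfl⟩ := hx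
  have haY : ∀ d : Fin 2 →₀ ℕ, d 1 = 0 → coeff d (a * X 1) = 0 := by
    have : (X 1 : R2) ∣ a * X 1 := Dvd.intro_left a rfl
    rwa [X_dvd_iff] at this
  have hbX : ∀ d : Fin 2 →₀ ℕ, d 0 < 2 → coeff d (b * (X 0) ^ 2) = 0 := by
    have : (X 0 : R2) ^ 2 ∣ b * (X 0) ^ 2 := Dvd.intro_left b rfl
    rwa [X_pow_dvd_iff] at this
  rw [LinearMap.mem_ker]
  have e0 : coeff (0 : Fin 2 →₀ ℕ) (a * X 1 + b * (X 0) ^ 2) = 0 := by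
    rw [map_add, haY 0 (by simp), hbX 0 (by simp), add_zero]
  have e1 : coeff (D 1 0) (a * X 1 + b * (X 0) ^ 2) = 0 := by
    rw [map_add, haY (D 1 0) (by simp), hbX (D 1 0) (by simp), add_zero]
  apply Prod.ext
  · simpa [psi] using e0
  · simpa [psi] using e1

lemma psi_surj : Function.Surjective psi := by
  rintro ⟨x, y⟩
  classical
  refine ⟨C x + monomial (D 1 0) y, ?_⟩
  have hD10 : (D 1 0 : Fin 2 →₀ ℕ) ≠ 0 := by
    intro h
    have := congrArg (fun d : Fin 2 →₀ ℕ => d 0) h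
    simpa using this
  apply Prod.ext
  · simp only [psi, LinearMap.prod_apply, Pi.prod, Function.prod_apply]
    rw [map_add, coeff_C, if_pos rfl, coeff_monomial_ne (Ne.symm hD10), add_zero]
  · simp only [psi, LinearMap.prod_apply, Pi.prod, Function.prod_apply]
    rw [map_add, coeff_C, if_neg hD10, coeff_monomial_same, zero_add]

lemma finrank_quot : Module.finrank ℂ (R2 ⧸ Jspan) = 2 := by
  classical
  have hker : LinearMap.ker psi ≤ Jspan.restrictScalars ℂ := by
    intro x hx
    rw [LinearMap.mem_ker] at hx
    have h0 : coeff (0 : Fin 2 →₀ ℕ) x = 0 := congrArg Prod.fst hx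
    have h1 : coeff (D 1 0) x = 0 := congrArg Prod.snd hx
    exact mem_J_of x h0 h1
  let f := Submodule.liftQ (Jspan.restrictScalars ℂ) psi J_le_ker
  have hinj : Function.Injective f :=
    LinearMap.ker_eq_bot.1 (Submodule.ker_liftQ_eq_bot _ _ _ hker)
  have hsurj : Function.Surjective f := by
    intro z
    obtain ⟨w, hw⟩ := psi_surj z
    exact ⟨Submodule.Quotient.mk w, by simpa [f] using congrArg id hw⟩
  let e : (R2 ⧸ Jspan.restrictScalars ℂ) ≃ₗ[ℂ] ℂ × ℂ :=
    LinearEquiv.ofBijective f ⟨hinj, hsurj⟩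
  let e2 : (R2 ⧸ Jspan) ≃ₗ[ℂ] ℂ × ℂ :=
    (Submodule.Quotient.restrictScalarsEquiv ℂ Jspan).symm.trans e
  rw [e2.finrank_eq]
  simp [Module.finrank_prod]

end Stmt5Aux

end

/-- Theorem 3.14(2), case `D_{2k+1}`: if `l·n = Y·(X² + ε·Y^{2k−1})` in `ℂ⟦X,Y⟧`
with `l, n` vanishing at the origin, then `dim_ℂ ℂ⟦X,Y⟧/⟨l,n⟩ = 2`. -/
theorem stmt5 (k : ℕ) (hk : 2 ≤ k) (ε : ℂ) (hε : ε = 1 ∨ ε = -1)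
    (l n : MvPowerSeries (Fin 2) ℂ)
    (hl : constantCoeff l = 0)
    (hn : constantCoeff n = 0)
    (hln : l * n = X 1 * ((X 0) ^ 2 + (C ε : MvPowerSeries (Fin 2) ℂ) * (X 1) ^ (2 * k - 1))) :
    Module.finrank ℂ (MvPowerSeries (Fin 2) ℂ ⧸ Ideal.span {l, n}) = 2 := by
  have hε0 : ε ≠ 0 := by rcases hε with rfl | rfl <;> norm_num
  have hmodd : ¬ (2 ∣ (2 * k - 1)) := by omega
  have hm1 : 1 ≤ 2 * k - 1 := by omega
  have hdvd : (X 1 : Stmt5Aux.R2) ∣ l * n := ⟨_, hln⟩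
  have hspan : Ideal.span {l, n} = Stmt5Aux.Jspan := by
    rcases Stmt5Aux.Y_prime.2.2 l n hdvd with h | h
    · exact Stmt5Aux.span_eq ε hε0 _ hmodd hm1 l n hl hn hln h
    · rw [show ({l, n} : Set Stmt5Aux.R2) = {n, l} from Set.pair_comm l n]
      exact Stmt5Aux.span_eq ε hε0 _ hmodd hm1 n l hn hl (by rwa [mul_comm]) h
  rw [hspan]
  exact Stmt5Aux.finrank_quot
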